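/- Let C be a small Grothendieck site, X a sheaf of sets on C, and π: Y → X a presheaf map. Then π represents a sheaf on the fibred site C/X if and only if Y is a sheaf on C. -/
import Mathlib


open CategoryTheory Opposite Limits

universe v u

variable {C : Type u} [Category.{v} C]

/-- A presheaf map `π : Y ⟶ X` *represents a sheaf on the fibred site `C/X`* if for every
object `U` of `C`, every section `x ∈ X(U)`, every covering sieve `S` of `U`, and every
compatible family of sections `σ_α` of `Y` lying (via `π`) over the restrictions of `x`
along the members `α` of `S`, there is a unique section of `Y` over `U` lying over `x`
and restricting to the given family. -/
def RepresentsSheaf (J : GrothendieckTopology C) {Y X : Cᵒᵖ ⥤ Type v} (π : Y ⟶ X) : Prop :=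
  ∀ (U : C) (x : X.obj (op U)) (S : Sieve U), S ∈ J U →
    ∀ (σ : ∀ ⦃V : C⦄ (α : V ⟶ U), S α → Y.obj (op V)),
      (∀ ⦃V : C⦄ (α : V ⟶ U) (hα : S α), π.app (op V) (σ α hα) = X.map α.op x) →
      (∀ ⦃V W : C⦄ (α : V ⟶ U) (hα : S α) (β : W ⟶ V),
          Y.map β.op (σ α hα) = σ (β ≫ α) (S.downward_closed hα β)) →
      ∃! s : Y.obj (op U), π.app (op U) s = x ∧
        ∀ ⦃V : C⦄ (α : V ⟶ U) (hα : S α), Y.map α.op s = σ α hα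

/-- Let `C` be a small Grothendieck site, `X` a sheaf of sets on `C`, and `π : Y ⟶ X` a
presheaf map.  Then `π` represents a sheaf on the fibred site `C/X` if and only if `Y` is a
sheaf on `C`. -/
theorem represents_sheaf_iff_isSheaf (J : GrothendieckTopology C) {Y X : Cᵒᵖ ⥤ Type v}
    (π : Y ⟶ X) (hX : Presieve.IsSheaf J X) :
    RepresentsSheaf J π ↔ Presieve.IsSheaf J Y := by
  constructor
  · intro h U S hS t ht
    -- push the family forward to X
    have htS := (Presieve.compatible_iff_sieveCompatible t).mp ht
    let p : Presieve.FamilyOfElements X (S : Presieve U) :=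
      fun V α hα => π.app (op V) (t α hα)
    have hp : p.Compatible := by
      intro Y₁ Y₂ Z g₁ g₂ f₁ f₂ h₁ h₂ hgf
      have := ht g₁ g₂ h₁ h₂ hgf
      simp only [p, ← FunctorToTypes.naturality, this]
    obtain ⟨x, hx, hxu⟩ := hX S hS p hp
    obtain ⟨s, ⟨hs₁, hs₂⟩, hsu⟩ := h U x S hS (fun V α hα => t α hα)
      (fun V α hα => (hx α hα).symm)
      (fun V W α hα β => (htS α β hα).symm)
    refine ⟨s, fun V α hα => hs₂ α hα, ?_⟩
    intro s' hs'
    refine hsu s' ⟨?_, fun V α hα => hs' α hα⟩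
    refine hxu (π.app (op U) s') (fun V α hα => ?_)
    simp only [p, ← hs' α hα, FunctorToTypes.naturality]
  · intro hY U x S hS σ hσπ hσcomp
    let t : Presieve.FamilyOfElements Y (S : Presieve U) := fun V α hα => σ α hα
    have ht : t.Compatible := by
      rw [Presieve.compatible_iff_sieveCompatible]
      intro V W f g hf
      exact (hσcomp f hf g).symm
    obtain ⟨s, hs, hsu⟩ := hY S hS t ht
    have hπs : π.app (op U) s = x := by
      refine (hX S hS).isSeparatedFor.ext (fun V α hα => ?_)
      rw [← FunctorToTypes.naturality, hs α hα]
      exact hσπ α hα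
    exact ⟨s, ⟨hπs, fun V α hα => hs α hα⟩, fun s' hs' => hsu s' fun V α hα => hs'.2 α hα⟩
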